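/- Let D be the Gauss-Lobatto differentiation matrix, ω_p the last quadrature weight, and e_p the last canonical basis vector. For any λ > 0, the matrix L = I − 2λ (D^T − (1/ω_p) e_p e_p^T) is invertible. -/

import Mathlib

open Polynomial

lemma iter_deriv_linear_mul (a : ℝ) (Q : ℝ[X]) :
    ∀ l : ℕ, derivative^[l + 1] ((X - C a) * Q)
      = (X - C a) * derivative^[l + 1] Q + C ((l : ℝ) + 1) * derivative^[l] Q := by
  intro l
  induction l with
  | zero => simp [derivative_mul]; ring
  | succ l ih =>
    rw [Function.iterate_succ_apply', ih, derivative_add, derivative_mul, derivative_mul]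
    simp only [derivative_sub, derivative_X, derivative_C, sub_zero, zero_mul, zero_add,
      one_mul]
    rw [← Function.iterate_succ_apply' derivative (l + 1) Q,
      ← Function.iterate_succ_apply' derivative l Q]
    have hC : (C ((↑(l + 1) : ℝ) + 1)) = C ((l : ℝ) + 1) + 1 := by push_cast; rw [C_add, C_1]
    rw [hC]
    ring

lemma nonneg_iter_deriv_prod {ι : Type*} [DecidableEq ι] (s : Finset ι) (a : ι → ℝ) (t : ℝ)
    (ha : ∀ j ∈ s, a j ≤ t) :
    ∀ l : ℕ, 0 ≤ (derivative^[l] (∏ j ∈ s, (X - C (a j)))).eval t := by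
  induction s using Finset.induction_on with
  | empty =>
    intro l
    cases l with
    | zero => simp
    | succ l => simp [Function.iterate_succ_apply]
  | @insert j s hj ih =>
    have haj : a j ≤ t := ha j (Finset.mem_insert_self j s)
    have ih' := ih (fun k hk => ha k (Finset.mem_insert_of_mem hk))
    intro l
    rw [Finset.prod_insert hj]
    cases l with
    | zero =>
      simp only [Function.iterate_zero_apply, eval_mul, eval_sub, eval_X, eval_C]
      have := ih' 0
      simp only [Function.iterate_zero_apply] at this
      have h1 : (0:ℝ) ≤ t - a j := by linarith
      positivity
    | succ l =>
      rw [iter_deriv_linear_mul]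
      simp only [eval_add, eval_mul, eval_sub, eval_X, eval_C]
      have h1 : (0:ℝ) ≤ t - a j := by linarith
      have h2 := ih' (l + 1)
      have h3 := ih' l
      have h4 : (0:ℝ) ≤ (l:ℝ) + 1 := by positivity
      nlinarith

/-- The diagonal block `L = I - 2λ (Dᵀ - (1/ω_p) e_p e_pᵀ)` of the 1D time-implicit
DGSEM scheme is invertible for every `λ > 0`. -/
theorem dgsem_1d_diag_block_invertible (p : ℕ)
    (ξ : Fin (p + 1) → ℝ) (hξ : StrictMono ξ)
    (h0 : ξ 0 = -1) (hlast : ξ (Fin.last p) = 1)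
    (ω : Fin (p + 1) → ℝ) (hω : ∀ k, 0 < ω k)
    (D : Matrix (Fin (p + 1)) (Fin (p + 1)) ℝ)
    (hD : ∀ k l, D k l = (derivative (Lagrange.basis Finset.univ ξ l)).eval (ξ k))
    (lam : ℝ) (hlam : 0 < lam) :
    IsUnit ((1 : Matrix (Fin (p + 1)) (Fin (p + 1)) ℝ)
      - (2 * lam) • (D.transpose
          - Matrix.single (Fin.last p) (Fin.last p) (ω (Fin.last p))⁻¹)).det := by
  classical
  have hinj : Set.InjOn ξ ↑(Finset.univ : Finset (Fin (p + 1))) := fun a _ b _ h => hξ.injective h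
  have hcard : (Finset.univ : Finset (Fin (p + 1))).card = p + 1 := by simp
  -- degree bounds
  have hdegb : ∀ l : Fin (p + 1), (Lagrange.basis Finset.univ ξ l).natDegree = p := by
    intro l
    rw [Lagrange.natDegree_basis hinj (Finset.mem_univ l), hcard]
    omega
  have hdeg : ∀ (m : ℕ) (l : Fin (p + 1)),
      (derivative^[m] (Lagrange.basis Finset.univ ξ l)).degree < (Finset.univ : Finset (Fin (p+1))).card := by
    intro m l
    rw [hcard]
    have h1 : (derivative^[m] (Lagrange.basis Finset.univ ξ l)).natDegree ≤ p := by
      calc (derivative^[m] (Lagrange.basis Finset.univ ξ l)).natDegree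
          ≤ (Lagrange.basis Finset.univ ξ l).natDegree - m := natDegree_iterate_derivative _ _
        _ ≤ p := by rw [hdegb l]; omega
    calc (derivative^[m] (Lagrange.basis Finset.univ ξ l)).degree
        ≤ ((derivative^[m] (Lagrange.basis Finset.univ ξ l)).natDegree : WithBot ℕ) :=
          degree_le_natDegree
      _ ≤ (p : WithBot ℕ) := by exact_mod_cast h1
      _ < ((p + 1 : ℕ) : WithBot ℕ) := by exact_mod_cast Nat.lt_succ_self p
  -- powers of D are iterated derivatives
  have hDpow : ∀ (m : ℕ) (k l : Fin (p + 1)),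
      (D ^ m) k l = (derivative^[m] (Lagrange.basis Finset.univ ξ l)).eval (ξ k) := by
    intro m
    induction m with
    | zero =>
      intro k l
      simp only [pow_zero, Function.iterate_zero_apply, Matrix.one_apply]
      by_cases h : k = l
      · subst h; rw [if_pos rfl, Lagrange.eval_basis_self hinj (Finset.mem_univ k)]
      · rw [if_neg h, Lagrange.eval_basis_of_ne (fun hh => h hh.symm) (Finset.mem_univ k)]
    | succ m ih =>
      intro k l
      set q : ℝ[X] := derivative^[m] (Lagrange.basis Finset.univ ξ l) with hq
      have hinterp : q = Lagrange.interpolate Finset.univ ξ (fun j => q.eval (ξ j)) :=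
        Lagrange.eq_interpolate hinj (hdeg m l)
      have hder : derivative q
          = ∑ j : Fin (p + 1), C (q.eval (ξ j)) * derivative (Lagrange.basis Finset.univ ξ j) := by
        conv_lhs => rw [hinterp]
        rw [Lagrange.interpolate_apply, map_sum]
        exact Finset.sum_congr rfl fun j _ => derivative_C_mul _ _
      rw [pow_succ', Matrix.mul_apply, Function.iterate_succ_apply', hder]
      rw [eval_finset_sum]
      refine Finset.sum_congr rfl fun j _ => ?_
      rw [hD k j, ih j l, eval_mul, eval_C]
      ring
  -- nilpotency
  have hDnil : D ^ (p + 1) = 0 := by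
    ext k l
    rw [hDpow (p + 1) k l, iterate_derivative_eq_zero (by rw [hdegb l]; omega)]
    simp
  set e : Fin (p + 1) := Fin.last p with he
  set N : Matrix (Fin (p + 1)) (Fin (p + 1)) ℝ := (2 * lam) • D.transpose with hN
  set M : Matrix (Fin (p + 1)) (Fin (p + 1)) ℝ := 1 - N with hM
  set S : Matrix (Fin (p + 1)) (Fin (p + 1)) ℝ := ∑ l ∈ Finset.range (p + 1), N ^ l with hS
  have hNpow : ∀ m : ℕ, N ^ m = ((2 * lam) ^ m) • ((D ^ m).transpose) := by
    intro m
    rw [hN, _root_.smul_pow, ← Matrix.transpose_pow]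
  have hNnil : N ^ (p + 1) = 0 := by
    rw [hNpow, hDnil]
    simp
  have hMS : M * S = 1 := by
    rw [hM, hS, mul_neg_geom_sum, hNnil, sub_zero]
  -- nonnegativity of the Lagrange basis derivatives at 1
  have hbasis : ∀ m : ℕ, 0 ≤ (derivative^[m] (Lagrange.basis Finset.univ ξ e)).eval 1 := by
    intro m
    have hsplit : Lagrange.basis Finset.univ ξ e
        = C (∏ j ∈ Finset.univ.erase e, (ξ e - ξ j)⁻¹)
          * ∏ j ∈ Finset.univ.erase e, (X - C (ξ j)) := by
      rw [Lagrange.basis]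
      simp_rw [Lagrange.basisDivisor]
      rw [Finset.prod_mul_distrib, map_prod]
    have hlt : ∀ j ∈ Finset.univ.erase e, ξ j < 1 := by
      intro j hj
      have hje : j ≠ e := (Finset.mem_erase.mp hj).1
      have : j < e := lt_of_le_of_ne (Fin.le_last j) hje
      rw [← hlast]
      exact hξ this
    have hc : 0 ≤ ∏ j ∈ Finset.univ.erase e, (ξ e - ξ j)⁻¹ := by
      refine Finset.prod_nonneg fun j hj => ?_
      have h1 := hlt j hj
      rw [hlast]
      have h2 : (0:ℝ) < 1 - ξ j := by linarith
      positivity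
    rw [hsplit, iterate_derivative_C_mul, eval_mul, eval_C]
    exact mul_nonneg hc (nonneg_iter_deriv_prod _ _ _ (fun j hj => le_of_lt (hlt j hj)) m)
  have hSee : 0 ≤ S e e := by
    rw [hS, Matrix.sum_apply]
    refine Finset.sum_nonneg fun m _ => ?_
    rw [hNpow, Matrix.smul_apply, Matrix.transpose_apply, hDpow m e e, hlast, smul_eq_mul]
    exact mul_nonneg (by positivity) (hbasis m)
  set c : ℝ := 2 * lam * (ω e)⁻¹ with hc
  have hcpos : 0 < c := by
    have := hω e
    rw [hc]; positivity
  set E : Matrix (Fin (p + 1)) (Fin (p + 1)) ℝ := Matrix.single e e 1 with hE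
  set A : Matrix (Fin (p + 1)) (Fin (p + 1)) ℝ := c • (S * E) with hA
  set α : ℝ := c * S e e with hα
  have hαnn : 0 ≤ α := mul_nonneg (le_of_lt hcpos) hSee
  have hESE : E * S * E = (S e e) • E := by
    ext i j
    by_cases hj : j = e
    · subst hj
      by_cases hi : i = e
      · subst hi
        simp [hE, Matrix.single, Matrix.mul_apply]
      · have hi' : ¬ e = i := fun h => hi h.symm
        simp [hE, hi', Matrix.single, Matrix.mul_apply]
    · have hj' : ¬ e = j := fun h => hj h.symm
      simp [hE, hj', Matrix.single, Matrix.mul_apply]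
  have hAA : A * A = α • A := by
    rw [hA, Matrix.smul_mul, Matrix.mul_smul, smul_smul]
    rw [show S * E * (S * E) = S * (E * S * E) by noncomm_ring]
    rw [hESE, Matrix.mul_smul, smul_smul, smul_smul]
    congr 1
    rw [hα]
    ring
  set B : Matrix (Fin (p + 1)) (Fin (p + 1)) ℝ := 1 + A with hB
  have hLMB : (1 : Matrix (Fin (p + 1)) (Fin (p + 1)) ℝ)
      - (2 * lam) • (D.transpose - Matrix.single e e (ω e)⁻¹) = M * B := by
    have h1 : M * B = M + c • E := by
      rw [hB, mul_add, mul_one, hA, Matrix.mul_smul, ← Matrix.mul_assoc, hMS, Matrix.one_mul]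
    have h2 : c • E = (2 * lam) • Matrix.single e e (ω e)⁻¹ := by
      rw [hE, Matrix.smul_single, Matrix.smul_single, smul_eq_mul, smul_eq_mul,
        mul_one, hc]
    rw [h1, h2, hM, hN, smul_sub]
    abel
  set t : ℝ := (1 + α)⁻¹ with ht
  have h1α : (1 : ℝ) + α ≠ 0 := by positivity
  have htt : t + t * α = 1 := by
    rw [ht]
    field_simp
  have hcomb : (1:ℝ) - t - t * α = 0 := by linarith
  have hBinv : B * (1 - t • A) = 1 := by
    rw [hB, add_mul, one_mul, mul_sub, mul_one, Matrix.mul_smul, hAA]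
    have hre : (1 : Matrix (Fin (p + 1)) (Fin (p + 1)) ℝ) - t • A + (A - t • (α • A))
        = 1 + ((1 - t - t * α) • A) := by module
    rw [hre, hcomb, zero_smul, add_zero]
  have hMunit : IsUnit M.det := by
    refine IsUnit.of_mul_eq_one S.det ?_
    rw [← Matrix.det_mul, hMS, Matrix.det_one]
  have hBunit : IsUnit B.det := by
    refine IsUnit.of_mul_eq_one (1 - t • A).det ?_
    rw [← Matrix.det_mul, hBinv, Matrix.det_one]
  rw [hLMB, Matrix.det_mul]
  exact hMunit.mul hBunit
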